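/- Let X be a finite alphabet, F a finite set of words over X each of length at least 1, k a field, and A = k⟨X⟩/I(F) the monomial algebra, with A_n the k-subspace of A spanned by images of words of length n. Assume L_n is nonempty for every n ≥ 1. Then the topological entropy of the associated subshift equals the binary logarithm of the algebraic entropy of A: limsup_{n→∞} (1/n)·log₂ |L_n| = log₂ ( limsup_{n→∞} (dim_k A_n)^{1/n} ), and both limsups are taken over the real sequences indicated. -/

import Mathlib

/-- A word is *legal* (with respect to the set of forbidden words `F`) if no element of `F`
is a contiguous factor of it. -/
def MonomialLegal {X : Type*} (F : Set (FreeMonoid X)) (w : FreeMonoid X) : Prop :=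
  ∀ f ∈ F, ∀ u v : FreeMonoid X, w ≠ u * f * v

/-- The defining relation of the monomial algebra `A = k⟨X⟩/I(F)`: each forbidden word is
identified with `0`, so that `RingQuot` of this relation is the quotient of
`k⟨X⟩ = MonoidAlgebra k (FreeMonoid X)` by the two-sided ideal generated by the words of `F`. -/
def monomialRel (k X : Type*) [Field k] (F : Set (FreeMonoid X)) :
    MonoidAlgebra k (FreeMonoid X) → MonoidAlgebra k (FreeMonoid X) → Prop :=
  fun a b => b = 0 ∧ ∃ f ∈ F, a = MonoidAlgebra.of k (FreeMonoid X) f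

namespace MonEnt

open FreeMonoid Filter
open scoped Classical

variable {k X : Type*} [Field k] {F : Set (FreeMonoid X)}

lemma legal_one (hF : ∀ f ∈ F, 1 ≤ FreeMonoid.length f) : MonomialLegal F 1 := by
  intro f hf u v h
  have h1 := hF f hf
  have h2 : FreeMonoid.length (1 : FreeMonoid X) = FreeMonoid.length (u * f * v) := by rw [← h]
  simp only [FreeMonoid.length_one, FreeMonoid.length_mul] at h2
  omega

lemma legal_of_mul_right {u v : FreeMonoid X} (h : MonomialLegal F (u * v)) :
    MonomialLegal F v := by
  intro f hf a b hv
  exact h f hf (u * a) b (by rw [hv, mul_assoc, mul_assoc, mul_assoc])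

abbrev Lw (F : Set (FreeMonoid X)) := {w : FreeMonoid X // MonomialLegal F w}

variable (k F) in
noncomputable def rho (w : FreeMonoid X) : Module.End k (Lw F →₀ k) :=
  Finsupp.lift _ k _ (fun m => if h : MonomialLegal F (w * m.1) then
    Finsupp.single (⟨w * m.1, h⟩ : Lw F) (1 : k) else 0)

lemma rho_single (w : FreeMonoid X) (m : Lw F) :
    rho k F w (Finsupp.single m (1 : k)) = (if h : MonomialLegal F (w * m.1) then
      Finsupp.single (⟨w * m.1, h⟩ : Lw F) (1 : k) else 0) := by
  simp [rho, Finsupp.lift_apply, Finsupp.sum_single_index]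

variable (k F) in
noncomputable def rhoHom : FreeMonoid X →* Module.End k (Lw F →₀ k) where
  toFun := rho k F
  map_one' := by
    refine Finsupp.lhom_ext' fun m => LinearMap.ext_ring ?_
    simp only [LinearMap.comp_apply, Finsupp.lsingle_apply, rho_single, Module.End.one_apply,
      LinearMap.id_apply]
    rw [dif_pos (show MonomialLegal F ((1:FreeMonoid X) * m.1) by rw [one_mul]; exact m.2)]
    exact congrArg (fun x => Finsupp.single x (1:k)) (Subtype.ext (one_mul m.1))
  map_mul' u v := by
    refine Finsupp.lhom_ext' fun m => LinearMap.ext_ring ?_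
    simp only [LinearMap.comp_apply, Finsupp.lsingle_apply, Module.End.mul_apply, rho_single]
    by_cases hv : MonomialLegal F (v * m.1)
    · rw [dif_pos hv, rho_single]
      by_cases huv : MonomialLegal F (u * v * m.1)
      · rw [dif_pos huv, dif_pos (show MonomialLegal F (u * (v * m.1)) by rwa [mul_assoc] at huv)]
        congr 1
        exact Subtype.ext (mul_assoc u v m.1)
      · rw [dif_neg huv,
          dif_neg (show ¬ MonomialLegal F (u * (v * m.1)) by rwa [mul_assoc] at huv)]
    · rw [dif_neg hv,
        dif_neg (show ¬ MonomialLegal F (u * v * m.1) from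
          fun h => hv (legal_of_mul_right (u := u) (by rwa [mul_assoc] at h))), map_zero]


variable (k F) in
noncomputable def Phi : MonoidAlgebra k (FreeMonoid X) →ₐ[k] Module.End k (Lw F →₀ k) :=
  MonoidAlgebra.lift k _ (FreeMonoid X) (rhoHom k F)

lemma Phi_rel {a b : MonoidAlgebra k (FreeMonoid X)} (h : monomialRel k X F a b) :
    Phi k F a = Phi k F b := by
  obtain ⟨rfl, f, hf, rfl⟩ := h
  rw [map_zero]
  rw [Phi, MonoidAlgebra.lift_of]
  refine Finsupp.lhom_ext' fun m => LinearMap.ext_ring ?_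
  simp only [LinearMap.comp_apply, Finsupp.lsingle_apply, LinearMap.zero_apply]
  show rho k F f (Finsupp.single m 1) = 0
  rw [rho_single, dif_neg]
  exact fun h => h f hf 1 m.1 (by rw [one_mul])

variable (k F) in
noncomputable def PhiQ : RingQuot (monomialRel k X F) →ₐ[k] Module.End k (Lw F →₀ k) :=
  RingQuot.liftAlgHom k ⟨Phi k F, fun _ _ h => Phi_rel h⟩

variable (k F) in
noncomputable def psi (hF : ∀ f ∈ F, 1 ≤ FreeMonoid.length f) :
    RingQuot (monomialRel k X F) →ₗ[k] (Lw F →₀ k) :=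
  (LinearMap.applyₗ (Finsupp.single (⟨1, legal_one hF⟩ : Lw F) (1 : k))).comp
    (PhiQ k F).toLinearMap

lemma psi_mk (hF : ∀ f ∈ F, 1 ≤ FreeMonoid.length f) (w : FreeMonoid X)
    (hw : MonomialLegal F w) :
    psi k F hF (RingQuot.mkAlgHom k (monomialRel k X F) (MonoidAlgebra.of k (FreeMonoid X) w)) =
      Finsupp.single (⟨w, hw⟩ : Lw F) (1 : k) := by
  have h1 : psi k F hF (RingQuot.mkAlgHom k (monomialRel k X F)
      (MonoidAlgebra.of k (FreeMonoid X) w)) =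
      PhiQ k F (RingQuot.mkAlgHom k (monomialRel k X F) (MonoidAlgebra.of k (FreeMonoid X) w))
        (Finsupp.single (⟨1, legal_one hF⟩ : Lw F) (1 : k)) := rfl
  rw [h1, PhiQ, RingQuot.liftAlgHom_mkAlgHom_apply, Phi, MonoidAlgebra.lift_of]
  show rho k F w (Finsupp.single _ 1) = _
  rw [rho_single, dif_pos (show MonomialLegal F (w * 1) by rwa [mul_one])]
  exact congrArg (fun x => Finsupp.single x (1:k)) (Subtype.ext (mul_one w))

lemma mk_illegal (w : FreeMonoid X) (hw : ¬ MonomialLegal F w) :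
    RingQuot.mkAlgHom k (monomialRel k X F) (MonoidAlgebra.of k (FreeMonoid X) w) = 0 := by
  rw [MonomialLegal] at hw
  push_neg at hw
  obtain ⟨f, hf, u, v, hw⟩ := hw
  have hz : RingQuot.mkAlgHom k (monomialRel k X F) (MonoidAlgebra.of k (FreeMonoid X) f) = 0 := by
    have := RingQuot.mkAlgHom_rel k (show monomialRel k X F
      (MonoidAlgebra.of k (FreeMonoid X) f) 0 from ⟨rfl, f, hf, rfl⟩)
    simpa using this
  rw [hw, map_mul, map_mul, map_mul, map_mul, hz, mul_zero, zero_mul]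


variable (X) in
def lenEquiv (n : ℕ) : {w : FreeMonoid X // FreeMonoid.length w = n} ≃ List.Vector X n where
  toFun w := ⟨FreeMonoid.toList w.1, w.2⟩
  invFun v := ⟨FreeMonoid.ofList v.1, v.2⟩
  left_inv w := rfl
  right_inv v := rfl

lemma key_finrank [Fintype X] (hF : ∀ f ∈ F, 1 ≤ FreeMonoid.length f) (n : ℕ) :
    Module.finrank k ↥(Submodule.span k (Set.range
      (fun w : {w : FreeMonoid X // FreeMonoid.length w = n} =>
        RingQuot.mkAlgHom k (monomialRel k X F) (MonoidAlgebra.of k (FreeMonoid X) w.1)))) =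
    Nat.card {w : FreeMonoid X // FreeMonoid.length w = n ∧ MonomialLegal F w} := by
  classical
  haveI : Finite {w : FreeMonoid X // FreeMonoid.length w = n} :=
    Finite.of_equiv _ (lenEquiv X n).symm
  haveI : Finite {w : FreeMonoid X // FreeMonoid.length w = n ∧ MonomialLegal F w} :=
    Finite.of_injective
      (fun w => (⟨w.1, w.2.1⟩ : {w : FreeMonoid X // FreeMonoid.length w = n}))
      (fun a b hab => Subtype.ext (by simpa [Subtype.ext_iff] using hab))
  cases nonempty_fintype {w : FreeMonoid X // FreeMonoid.length w = n ∧ MonomialLegal F w}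
  set b : {w : FreeMonoid X // FreeMonoid.length w = n ∧ MonomialLegal F w} →
      RingQuot (monomialRel k X F) := fun w =>
    RingQuot.mkAlgHom k (monomialRel k X F) (MonoidAlgebra.of k (FreeMonoid X) w.1) with hbdef
  have h2 : LinearIndependent k
      (fun w : {w : FreeMonoid X // FreeMonoid.length w = n ∧ MonomialLegal F w} =>
        Finsupp.single (⟨w.1, w.2.2⟩ : Lw F) (1 : k)) := by
    have h3 := (Finsupp.basisSingleOne (R := k) (ι := Lw F)).linearIndependent.comp
      (fun w : {w : FreeMonoid X // FreeMonoid.length w = n ∧ MonomialLegal F w} =>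
        (⟨w.1, w.2.2⟩ : Lw F))
      (fun a b hab => Subtype.ext (by simpa [Subtype.ext_iff] using hab))
    simpa [Function.comp_def, Finsupp.coe_basisSingleOne] using h3
  have hb : LinearIndependent k b := by
    refine LinearIndependent.of_comp (psi k F hF) ?_
    have hcomp : (psi k F hF) ∘ b =
        (fun w : {w : FreeMonoid X // FreeMonoid.length w = n ∧ MonomialLegal F w} =>
          Finsupp.single (⟨w.1, w.2.2⟩ : Lw F) (1 : k)) := by
      funext w
      exact psi_mk hF w.1 w.2.2
    rw [hcomp]
    exact h2
  have hspan : Submodule.span k (Set.range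
      (fun w : {w : FreeMonoid X // FreeMonoid.length w = n} =>
        RingQuot.mkAlgHom k (monomialRel k X F) (MonoidAlgebra.of k (FreeMonoid X) w.1))) =
      Submodule.span k (Set.range b) := by
    apply le_antisymm
    · rw [Submodule.span_le]
      rintro _ ⟨w, rfl⟩
      by_cases hw : MonomialLegal F w.1
      · exact Submodule.subset_span ⟨⟨w.1, w.2, hw⟩, rfl⟩
      · simp only [mk_illegal w.1 hw]
        exact Submodule.zero_mem _
    · apply Submodule.span_mono
      rintro _ ⟨w, rfl⟩
      exact ⟨⟨w.1, w.2.1⟩, rfl⟩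
  rw [hspan, finrank_span_eq_card hb, Nat.card_eq_fintype_card]


lemma limsup_log_eq (a : ℕ → ℕ) (C : ℕ) (ha1 : ∀ n, 1 ≤ a n) (haC : ∀ n, a n ≤ C ^ n) :
    Filter.limsup (fun n : ℕ => (1 / (n : ℝ)) * Real.logb 2 (a n)) Filter.atTop =
    Real.logb 2 (Filter.limsup (fun n : ℕ => ((a n : ℝ)) ^ (1 / (n : ℝ))) Filter.atTop) := by
  have hC1 : (1 : ℝ) ≤ (C : ℝ) := by
    have h := (ha1 1).trans (haC 1)
    rw [pow_one] at h
    exact_mod_cast h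
  have hC0 : (0 : ℝ) ≤ (C : ℝ) := zero_le_one.trans hC1
  set g : ℕ → ℝ := fun n => (a n : ℝ) ^ (1 / (n : ℝ)) with hg
  have hg1 : ∀ n, 1 ≤ g n := by
    intro n
    have h2 := Real.rpow_le_rpow zero_le_one
      (show (1:ℝ) ≤ (a n : ℝ) by exact_mod_cast ha1 n)
      (show (0:ℝ) ≤ 1 / (n : ℝ) by positivity)
    simpa [Real.one_rpow, hg, one_div] using h2
  have hgC : ∀ n, g n ≤ (C : ℝ) := by
    intro n
    rcases Nat.eq_zero_or_pos n with hn | hn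
    · subst hn
      simp only [hg, Nat.cast_zero, div_zero, Real.rpow_zero]
      exact hC1
    · have hne : (n : ℝ) ≠ 0 := by positivity
      calc g n ≤ ((C : ℝ) ^ (n : ℕ)) ^ (1 / (n : ℝ)) := by
            refine Real.rpow_le_rpow (by positivity) ?_ (by positivity)
            exact_mod_cast haC n
        _ = (C : ℝ) := by
            rw [← Real.rpow_natCast (C : ℝ) n, ← Real.rpow_mul hC0,
              mul_one_div_cancel hne, Real.rpow_one]
  have hbdd : Filter.IsBoundedUnder (· ≤ ·) Filter.atTop g :=
    Filter.isBoundedUnder_of ⟨(C : ℝ), hgC⟩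
  have hbddge : Filter.IsBoundedUnder (· ≥ ·) Filter.atTop g :=
    Filter.isBoundedUnder_of ⟨(1 : ℝ), hg1⟩
  have hcobdd : Filter.IsCoboundedUnder (· ≤ ·) Filter.atTop g :=
    hbddge.isCoboundedUnder_le
  have hlim1 : 1 ≤ Filter.limsup g Filter.atTop :=
    Filter.le_limsup_of_frequently_le (Filter.Frequently.of_forall hg1) hbdd
  have hmono : Monotone (fun x : ℝ => Real.logb 2 (max 1 x)) := by
    intro x y hxy
    exact Real.logb_le_logb_of_le (by norm_num)
      (lt_of_lt_of_le zero_lt_one (le_max_left 1 x)) (max_le_max le_rfl hxy)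
  have hcont : ContinuousAt (fun x : ℝ => Real.logb 2 (max 1 x))
      (Filter.limsup g Filter.atTop) := by
    show ContinuousAt ((fun y : ℝ => Real.log y / Real.log 2) ∘ (fun x : ℝ => max 1 x)) _
    refine ContinuousAt.comp ?_ ((continuous_const.max continuous_id).continuousAt)
    refine ContinuousAt.div_const ?_ _
    refine Real.continuousAt_log ?_
    have : (1 : ℝ) ≤ max 1 (Filter.limsup g Filter.atTop) := le_max_left _ _
    positivity
  have key := hmono.map_limsup_of_continuousAt g hcont hbdd hcobdd
  simp only [max_eq_right hlim1] at key
  have hfg : ((fun x : ℝ => Real.logb 2 (max 1 x)) ∘ g) =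
      fun n : ℕ => (1 / (n : ℝ)) * Real.logb 2 (a n) := by
    funext n
    have h0 : (0:ℝ) < (a n : ℝ) := by exact_mod_cast ha1 n
    simp only [Function.comp_apply, max_eq_right (hg1 n), hg]
    rw [Real.logb, Real.logb, max_eq_right (show (1:ℝ) ≤ (a n : ℝ) ^ (1 / (n : ℝ)) from hg1 n), Real.log_rpow h0, mul_div_assoc]
  rw [hfg] at key
  exact key.symm

end MonEnt


/-- The topological entropy of the subshift associated to the finitely presented monomial
algebra `A = k⟨X⟩/I(F)` (namely `limsup (1/n) log₂ |L_n|`, where `L_n` is the set of legal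
words of length `n`) equals the binary logarithm of the algebraic entropy of `A`
(namely `limsup (dim_k A_n)^(1/n)`, where `A_n` is the span of the images of the words of
length `n`). -/
theorem topological_entropy_eq_logb_algebraic_entropy
    (k X : Type*) [Field k] [Fintype X] (F : Finset (FreeMonoid X))
    (hF : ∀ f ∈ F, 1 ≤ FreeMonoid.length f)
    (hne : ∀ n : ℕ, 1 ≤ n →
      ∃ w : FreeMonoid X, FreeMonoid.length w = n ∧ MonomialLegal (↑F) w) :
    Filter.limsup
      (fun n : ℕ => (1 / (n : ℝ)) *
        Real.logb 2
          (Nat.card {w : FreeMonoid X // FreeMonoid.length w = n ∧ MonomialLegal (↑F) w}))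
      Filter.atTop =
    Real.logb 2
      (Filter.limsup
        (fun n : ℕ =>
          ((Module.finrank k
            ↥(Submodule.span k
              (Set.range
                (fun w : {w : FreeMonoid X // FreeMonoid.length w = n} =>
                  RingQuot.mkAlgHom k (monomialRel k X ↑F)
                    (MonoidAlgebra.of k (FreeMonoid X) w.1)))) : ℝ) ^ (1 / (n : ℝ))))
        Filter.atTop) := by
  classical
  have hF' : ∀ f ∈ (↑F : Set (FreeMonoid X)), 1 ≤ FreeMonoid.length f := by
    intro f hf
    exact hF f (by simpa using hf)
  have hfin : ∀ n : ℕ,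
      Finite {w : FreeMonoid X // FreeMonoid.length w = n ∧ MonomialLegal (↑F) w} := by
    intro n
    haveI : Finite {w : FreeMonoid X // FreeMonoid.length w = n} :=
      Finite.of_equiv _ (MonEnt.lenEquiv X n).symm
    exact Finite.of_injective
      (fun w => (⟨w.1, w.2.1⟩ : {w : FreeMonoid X // FreeMonoid.length w = n}))
      (fun a b hab => Subtype.ext (by simpa [Subtype.ext_iff] using hab))
  have hrw : (fun n : ℕ =>
          ((Module.finrank k
            ↥(Submodule.span k
              (Set.range
                (fun w : {w : FreeMonoid X // FreeMonoid.length w = n} =>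
                  RingQuot.mkAlgHom k (monomialRel k X ↑F)
                    (MonoidAlgebra.of k (FreeMonoid X) w.1)))) : ℝ) ^ (1 / (n : ℝ)))) =
      fun n : ℕ =>
        ((Nat.card {w : FreeMonoid X // FreeMonoid.length w = n ∧ MonomialLegal (↑F) w} : ℝ))
          ^ (1 / (n : ℝ)) := by
    funext n
    rw [MonEnt.key_finrank hF' n]
  rw [hrw]
  refine MonEnt.limsup_log_eq _ (Fintype.card X) ?_ ?_
  · intro n
    haveI := hfin n
    haveI : Nonempty {w : FreeMonoid X // FreeMonoid.length w = n ∧ MonomialLegal (↑F) w} := by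
      rcases Nat.eq_zero_or_pos n with hn | hn
      · subst hn
        exact ⟨⟨1, FreeMonoid.length_one, MonEnt.legal_one hF'⟩⟩
      · obtain ⟨w, h1, h2⟩ := hne n hn
        exact ⟨⟨w, h1, h2⟩⟩
    exact Nat.card_pos
  · intro n
    haveI : Finite {w : FreeMonoid X // FreeMonoid.length w = n} :=
      Finite.of_equiv _ (MonEnt.lenEquiv X n).symm
    have h1 : Nat.card {w : FreeMonoid X // FreeMonoid.length w = n ∧ MonomialLegal (↑F) w} ≤
        Nat.card {w : FreeMonoid X // FreeMonoid.length w = n} :=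
      Nat.card_le_card_of_injective
        (fun w => (⟨w.1, w.2.1⟩ : {w : FreeMonoid X // FreeMonoid.length w = n}))
        (fun a b hab => Subtype.ext (by simpa [Subtype.ext_iff] using hab))
    have h2 : Nat.card {w : FreeMonoid X // FreeMonoid.length w = n} = Fintype.card X ^ n := by
      rw [Nat.card_congr (MonEnt.lenEquiv X n), Nat.card_eq_fintype_card, card_vector]
    omega
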